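/- Let (Ω,P) be a probability space, (E,𝔈) a measurable space, μ a probability measure on E, and Y_1,…,Y_t : Ω → E i.i.d. random variables with common law μ. Let f0, f1 : E → (0,∞) be measurable with ∫_E |ln(f1/f0)| dμ < ∞. Fix p_0 ∈ [0,1] and define random variables p_j recursively by p_j = f1(Y_j)·p_{j−1} / (f1(Y_j)·p_{j−1} + f0(Y_j)·(1−p_{j−1})) for 1 ≤ j ≤ t. Then E[p_t·(1−p_t)] ≥ p_0·(1−p_0)·exp(−t·∫_E |ln(f1/f0)| dμ). -/

import Mathlib

open MeasureTheory ProbabilityTheory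

theorem bayes_step_aux {a b q : ℝ} (ha : 0 < a) (hb : 0 < b) (hq : q ∈ Set.Icc (0:ℝ) 1) :
    (a * q / (a * q + b * (1 - q))) ∈ Set.Icc (0:ℝ) 1 ∧
    q * (1 - q) * Real.exp (-|Real.log (a / b)|) ≤
      (a * q / (a * q + b * (1 - q))) * (1 - a * q / (a * q + b * (1 - q))) := by
  obtain ⟨hq0, hq1⟩ := hq
  set D := a * q + b * (1 - q) with hD
  have hDpos : 0 < D := by
    rcases le_total a b with h | h
    · nlinarith [mul_nonneg (sub_nonneg.mpr h) (sub_nonneg.mpr hq1)]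
    · nlinarith [mul_nonneg (sub_nonneg.mpr h) hq0]
  have hmem : (a * q / D) ∈ Set.Icc (0:ℝ) 1 := by
    constructor
    · positivity
    · rw [div_le_one hDpos]; nlinarith
  refine ⟨hmem, ?_⟩
  have h1q : 1 - a * q / D = b * (1 - q) / D := by
    field_simp
    rw [hD]; ring
  rw [h1q]
  -- c := exp(-|log(a/b)|); show c * D^2 ≤ a * b in both cases
  have hc : Real.exp (-|Real.log (a / b)|) * D ^ 2 ≤ a * b := by
    rcases le_total a b with hab | hab
    · have hlog : Real.log (a / b) ≤ 0 :=
        Real.log_nonpos (by positivity) ((div_le_one hb).mpr hab)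
      rw [abs_of_nonpos hlog, neg_neg, Real.exp_log (by positivity)]
      have hDb : D ≤ b := by nlinarith
      rw [div_mul_eq_mul_div, div_le_iff₀ hb]
      nlinarith [mul_le_mul_of_nonneg_left (mul_le_mul hDb hDb hDpos.le hb.le) ha.le]
    · have hlog : 0 ≤ Real.log (a / b) :=
        Real.log_nonneg ((one_le_div hb).mpr hab)
      rw [abs_of_nonneg hlog, Real.exp_neg, Real.exp_log (by positivity)]
      have hDa : D ≤ a := by nlinarith
      rw [inv_div, div_mul_eq_mul_div, div_le_iff₀ (by positivity : (0:ℝ) < a)]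
      nlinarith [mul_le_mul_of_nonneg_left (mul_le_mul hDa hDa hDpos.le ha.le) hb.le]
  have hcle : Real.exp (-|Real.log (a / b)|) ≤ a * b / D ^ 2 :=
    (le_div_iff₀ (by positivity)).mpr hc
  calc q * (1 - q) * Real.exp (-|Real.log (a / b)|)
      ≤ q * (1 - q) * (a * b / D ^ 2) :=
        mul_le_mul_of_nonneg_left hcle (by nlinarith)
    _ = a * q / D * (b * (1 - q) / D) := by field_simp

/-- Corollary 1 of the appendix: after `t` i.i.d. noisy observations `Y_1, …, Y_t` with
common law `μ`, the expected posterior variance of a bit updated by Bayes rule with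
likelihoods `f1, f0` satisfies
`E[p_t (1 − p_t)] ≥ p_0 (1 − p_0) exp(−t ∫ |ln(f1/f0)| dμ)`. -/
theorem stmt_2 {Ω : Type*} [MeasurableSpace Ω] (P : Measure Ω) [IsProbabilityMeasure P]
    {E : Type*} [MeasurableSpace E] (μ : Measure E) [IsProbabilityMeasure μ]
    (t : ℕ) (ht : 1 ≤ t) (Y : Fin t → Ω → E)
    (hmeas : ∀ i, Measurable (Y i))
    (hlaw : ∀ i, Measure.map (Y i) P = μ)
    (hindep : iIndepFun Y P)
    (f0 f1 : E → ℝ) (hf0m : Measurable f0) (hf1m : Measurable f1)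
    (hf0 : ∀ e, 0 < f0 e) (hf1 : ∀ e, 0 < f1 e)
    (hint : Integrable (fun e => |Real.log (f1 e / f0 e)|) μ)
    (p0 : ℝ) (hp0 : p0 ∈ Set.Icc (0 : ℝ) 1)
    (p : ℕ → Ω → ℝ) (hpzero : ∀ ω, p 0 ω = p0)
    (hrec : ∀ i : Fin t, ∀ ω, p ((i : ℕ) + 1) ω =
      f1 (Y i ω) * p (i : ℕ) ω /
        (f1 (Y i ω) * p (i : ℕ) ω + f0 (Y i ω) * (1 - p (i : ℕ) ω))) :
    ∫ ω, p t ω * (1 - p t ω) ∂P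
      ≥ p0 * (1 - p0) * Real.exp (-(t : ℝ) * ∫ e, |Real.log (f1 e / f0 e)| ∂μ) := by
  set L : E → ℝ := fun e => |Real.log (f1 e / f0 e)| with hLdef
  have hLmeas : Measurable L := ((hf1m.div hf0m).log).abs
  have hLnn : ∀ e, 0 ≤ L e := fun e => abs_nonneg _
  -- key induction
  have key : ∀ j, j ≤ t → Measurable (p j) ∧ ∀ ω,
      p j ω ∈ Set.Icc (0:ℝ) 1 ∧
      p0 * (1 - p0) * Real.exp
          (-(∑ i ∈ Finset.univ.filter (fun i : Fin t => (i:ℕ) < j), L (Y i ω)))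
        ≤ p j ω * (1 - p j ω) := by
    intro j
    induction j with
    | zero =>
      intro _
      have hp0eq : p 0 = fun _ => p0 := funext hpzero
      refine ⟨by rw [hp0eq]; exact measurable_const, fun ω => ?_⟩
      have hfil : Finset.univ.filter (fun i : Fin t => (i:ℕ) < 0) = ∅ := by
        ext k; simp
      rw [hp0eq, hfil]
      refine ⟨hp0, ?_⟩
      simp
    | succ j ih =>
      intro hj
      have hjt : j < t := hj
      obtain ⟨hm, hpt⟩ := ih (Nat.le_of_lt hjt)
      set i : Fin t := ⟨j, hjt⟩ with hi
      have hpe : p (j + 1) = fun ω =>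
          f1 (Y i ω) * p j ω / (f1 (Y i ω) * p j ω + f0 (Y i ω) * (1 - p j ω)) :=
        funext (hrec i)
      have hm' : Measurable (p (j + 1)) := by
        rw [hpe]
        exact ((hf1m.comp (hmeas i)).mul hm).div
          (((hf1m.comp (hmeas i)).mul hm).add
            ((hf0m.comp (hmeas i)).mul (measurable_const.sub hm)))
      refine ⟨hm', fun ω => ?_⟩
      obtain ⟨hqIcc, hqbd⟩ := hpt ω
      have hstep := bayes_step_aux (hf1 (Y i ω)) (hf0 (Y i ω)) hqIcc
      have hset : Finset.univ.filter (fun k : Fin t => (k:ℕ) < j + 1)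
          = insert i (Finset.univ.filter (fun k : Fin t => (k:ℕ) < j)) := by
        ext k
        simp only [Finset.mem_filter, Finset.mem_univ, true_and, Finset.mem_insert,
          Fin.ext_iff, hi]
        omega
      have hnotmem : i ∉ Finset.univ.filter (fun k : Fin t => (k:ℕ) < j) := by
        simp [hi]
      constructor
      · rw [hpe]; exact hstep.1
      · rw [hpe, hset, Finset.sum_insert hnotmem]
        have hLterm : L (Y i ω) = |Real.log (f1 (Y i ω) / f0 (Y i ω))| := rfl
        calc p0 * (1 - p0) * Real.exp (-(L (Y i ω) +
              ∑ k ∈ Finset.univ.filter (fun k : Fin t => (k:ℕ) < j), L (Y k ω)))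
            = p0 * (1 - p0) * Real.exp
                (-(∑ k ∈ Finset.univ.filter (fun k : Fin t => (k:ℕ) < j), L (Y k ω)))
              * Real.exp (-(L (Y i ω))) := by
              rw [neg_add, Real.exp_add]; ring
          _ ≤ p j ω * (1 - p j ω) * Real.exp (-(L (Y i ω))) :=
              mul_le_mul_of_nonneg_right hqbd (Real.exp_nonneg _)
          _ ≤ _ := by rw [hLterm]; exact hstep.2
  obtain ⟨hmt, hptw⟩ := key t le_rfl
  -- full filter is univ
  have hfull : Finset.univ.filter (fun i : Fin t => (i:ℕ) < t) = Finset.univ := by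
    ext k; simp [k.isLt]
  set S : Ω → ℝ := fun ω => ∑ i : Fin t, L (Y i ω) with hSdef
  have hSmeas : Measurable S := by
    apply Finset.measurable_sum
    exact fun i _ => hLmeas.comp (hmeas i)
  have hSnn : ∀ ω, 0 ≤ S ω := fun ω => Finset.sum_nonneg fun i _ => hLnn _
  have hLint : ∀ i : Fin t, Integrable (fun ω => L (Y i ω)) P := by
    intro i
    have h1 : Integrable L (Measure.map (Y i) P) := by rw [hlaw i]; exact hint
    exact (integrable_map_measure hLmeas.aestronglyMeasurable
      (hmeas i).aemeasurable).mp h1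
  have hSint : Integrable S P := integrable_finset_sum _ fun i _ => hLint i
  have hSval : ∫ ω, S ω ∂P = (t : ℝ) * ∫ e, L e ∂μ := by
    rw [hSdef]
    rw [integral_finset_sum _ fun i _ => hLint i]
    have : ∀ i : Fin t, ∫ ω, L (Y i ω) ∂P = ∫ e, L e ∂μ := by
      intro i
      rw [← hlaw i, integral_map (hmeas i).aemeasurable hLmeas.aestronglyMeasurable]
    simp_rw [this]
    simp [Finset.card_univ]
  -- integrability of exp(-S)
  have hexpmeas : Measurable fun ω => Real.exp (-S ω) := (hSmeas.neg).exp
  have hexpint : Integrable (fun ω => Real.exp (-S ω)) P := by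
    refine Integrable.mono' (integrable_const 1) hexpmeas.aestronglyMeasurable ?_
    filter_upwards with ω
    rw [Real.norm_eq_abs, abs_of_nonneg (Real.exp_nonneg _)]
    exact Real.exp_le_one_iff.mpr (neg_nonpos.mpr (hSnn ω))
  -- Jensen
  have hjensen : Real.exp (∫ ω, -S ω ∂P) ≤ ∫ ω, Real.exp (-S ω) ∂P := by
    have := (convexOn_exp).map_integral_le (f := fun ω => -S ω) (μ := P)
      Real.continuous_exp.continuousOn isClosed_univ
      (Filter.Eventually.of_forall fun ω => Set.mem_univ _)
      hSint.neg (by exact hexpint)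
    simpa using this
  -- integrability of p t (1 - p t)
  have hptint : Integrable (fun ω => p t ω * (1 - p t ω)) P := by
    refine Integrable.mono' (integrable_const 1)
      (hmt.mul (measurable_const.sub hmt)).aestronglyMeasurable ?_
    filter_upwards with ω
    obtain ⟨⟨h0, h1⟩, _⟩ := hptw ω
    rw [Real.norm_eq_abs, abs_of_nonneg (by nlinarith)]
    nlinarith
  have hlow : ∀ ω, p0 * (1 - p0) * Real.exp (-S ω) ≤ p t ω * (1 - p t ω) := by
    intro ω
    have := (hptw ω).2
    rwa [hfull] at this
  have hlowint : Integrable (fun ω => p0 * (1 - p0) * Real.exp (-S ω)) P :=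
    hexpint.const_mul _
  have hp0nn : 0 ≤ p0 * (1 - p0) := by
    obtain ⟨h0, h1⟩ := hp0; nlinarith
  calc p0 * (1 - p0) * Real.exp (-(t : ℝ) * ∫ e, |Real.log (f1 e / f0 e)| ∂μ)
      = p0 * (1 - p0) * Real.exp (∫ ω, -S ω ∂P) := by
        rw [integral_neg, hSval, neg_mul]
    _ ≤ p0 * (1 - p0) * ∫ ω, Real.exp (-S ω) ∂P :=
        mul_le_mul_of_nonneg_left hjensen hp0nn
    _ = ∫ ω, p0 * (1 - p0) * Real.exp (-S ω) ∂P := (integral_const_mul _ _).symm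
    _ ≤ ∫ ω, p t ω * (1 - p t ω) ∂P :=
        integral_mono hlowint hptint hlow
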